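/- arXiv:2404.04056 — 3 statements merged into one kernel-verified Lean document; each statement's English description precedes it below -/
import Mathlib

section
/- Let p > q ≥ 2 be coprime integers, and let t, h be integers with 0 < t < p, 0 < h < q, and h·p − t·q = 1. Let S = {k : 1 ≤ k ≤ p and k ≡ 1 − i·q (mod p) for some 0 ≤ i < t}. Then the number of elements k of S with k ≤ q equals h, i.e., |S ∩ {1, …, q}| = (t·q + 1)/p = h. -/
theorem card_S_le_q (p q t h : ℤ) (hq : 2 ≤ q) (hpq : q < p) (hcop : Int.gcd p q = 1)
    (ht0 : 0 < t) (htp : t < p) (hh0 : 0 < h) (hhq : h < q) (hth : h * p - t * q = 1) :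
    (t * q + 1) / p = h ∧
    ({k : ℤ | 1 ≤ k ∧ k ≤ q ∧
        1 ≤ k ∧ k ≤ p ∧ ∃ i : ℤ, 0 ≤ i ∧ i < t ∧ k ≡ 1 - i * q [ZMOD p]}.ncard : ℤ) = h := by
  have hp0 : (0:ℤ) < p := lt_trans (by linarith) hpq
  have hq0 : (0:ℤ) < q := by linarith
  have heq : t * q + 1 = h * p := by linarith
  constructor
  · rw [heq]; exact Int.mul_ediv_cancel h hp0.ne'
  -- the set is the image of Finset.Ico 0 h under j ↦ 1 + j*p % q
  have hset : {k : ℤ | 1 ≤ k ∧ k ≤ q ∧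
      1 ≤ k ∧ k ≤ p ∧ ∃ i : ℤ, 0 ≤ i ∧ i < t ∧ k ≡ 1 - i * q [ZMOD p]}
      = ↑((Finset.Ico (0:ℤ) h).image (fun j => 1 + j * p % q)) := by
    ext k
    simp only [Set.mem_setOf_eq, Finset.coe_image, Set.mem_image, Finset.mem_coe,
      Finset.mem_Ico]
    constructor
    · rintro ⟨hk1, hkq, -, -, i, hi0, hit, hmod⟩
      have hd : p ∣ (1 - i * q) - k := hmod.dvd
      obtain ⟨d, hd⟩ := hd
      refine ⟨-d, ⟨?_, ?_⟩, ?_⟩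
      · -- -d * p = k - 1 + i*q ≥ 0
        have h1 : -d * p = k - 1 + i * q := by linarith [hd]
        nlinarith [mul_nonneg hi0 hq0.le]
      · have h1 : -d * p = k - 1 + i * q := by linarith [hd]
        -- -d*p ≤ q-1 + (t-1)q = t*q - 1 < h*p
        nlinarith
      · have h1 : -d * p = k - 1 + i * q := by linarith [hd]
        have h2 : -d * p % q = k - 1 := by
          have : -d * p = (k - 1) + q * i := by linarith
          rw [this, Int.add_mul_emod_self_left]
          exact Int.emod_eq_of_lt (by linarith) (by linarith)
        omega
    · rintro ⟨j, ⟨hj0, hjh⟩, rfl⟩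
      have hjp0 : 0 ≤ j * p := mul_nonneg hj0 hp0.le
      have hm0 : 0 ≤ j * p % q := Int.emod_nonneg _ hq0.ne'
      have hmq : j * p % q < q := Int.emod_lt_of_pos _ hq0
      refine ⟨by linarith, by linarith, by linarith, by linarith, j * p / q, ?_, ?_, ?_⟩
      · exact Int.ediv_nonneg hjp0 hq0.le
      · -- (j*p/q) * q ≤ j*p ≤ (h-1)*p = t*q + 1 - p < t*q
        have h1 : j * p / q * q ≤ j * p := Int.ediv_mul_le _ hq0.ne'
        have h2 : j * p ≤ (h - 1) * p := by nlinarith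
        nlinarith
      · show _ ≡ _ [ZMOD p]
        have : 1 + j * p % q - (1 - j * p / q * q) = j * p := by
          have := Int.emod_add_mul_ediv (j * p) q
          ring_nf
          ring_nf at this
          linarith
        have hdvd : p ∣ (1 - j * p / q * q) - (1 + j * p % q) := ⟨-j, by linarith⟩
        exact (Int.modEq_iff_dvd.mpr hdvd).symm.symm
  rw [hset, Set.ncard_coe_finset, Finset.card_image_of_injOn, Int.card_Ico]
  · simp [Int.toNat_of_nonneg hh0.le]
  · intro a ha b hb hab
    simp only [Finset.coe_Ico, Set.mem_Ico] at ha hb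
    have hab' : 1 + a * p % q = 1 + b * p % q := hab
    have : a * p % q = b * p % q := by omega
    have hcop' : IsCoprime q p := (Int.isCoprime_iff_gcd_eq_one.mpr hcop).symm
    have hdq : q ∣ (b - a) * p := by
      have := Int.ModEq.dvd (a := a * p) (b := b * p) this
      convert this using 1; ring
    have : q ∣ b - a := hcop'.dvd_of_dvd_mul_right hdq
    obtain ⟨c, hc⟩ := this
    have hc0 : c = 0 := by nlinarith [ha.1, ha.2, hb.1, hb.2]
    rw [hc0, mul_zero] at hc
    omega
end

section
/- Let v be a rational-valued function on coprime pairs (p, q) with p > q ≥ 0 satisfying v(a, b) = v(b, a) whenever both sides are defined, v(1, 0) = v(1, q) = 0, and the Feller–Krcatovich recursion v(p, q) = v(p − q, q) − q²/4 if q is even, v(p, q) = v(p − q, q) − (q² − 1)/4 if q is odd (for p > q ≥ 2, interpreting v(p−q, q) as v of the pair sorted in decreasing order). Then for all coprime p > q ≥ 2 with unique (t, h) satisfying 0 < t < p, 0 < h < q, h·p − t·q = 1, and setting p' = max(|p − 2t|, |q − 2h|), q' = min(|p − 2t|, |q − 2h|), one has v(p, q) − v(p', q') = (1 − h·(p − t)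 − t·(q − h))/2. -/
/-- The correction term in the Feller–Krcatovich recursion. -/
def ccFK (q : ℤ) : ℚ := if Even q then (q : ℚ) ^ 2 / 4 else ((q : ℚ) ^ 2 - 1) / 4

lemma ccFK_neg (x : ℤ) : ccFK (-x) = ccFK x := by
  simp [ccFK, even_neg, neg_sq]

lemma ccFK_zero : ccFK 0 = 0 := by simp [ccFK]

lemma ccFK_one : ccFK 1 = 0 := by norm_num [ccFK, Int.even_iff]

lemma ccFK_sub (q h : ℤ) : ccFK q - ccFK (q - 2 * h) = ((h * (q - h) : ℤ) : ℚ) := by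
  rcases Int.even_or_odd q with he | ho
  · have h2 : Even (q - 2 * h) := by
      rcases he with ⟨k, hk⟩; exact ⟨k - h, by omega⟩
    simp only [ccFK, if_pos he, if_pos h2]
    push_cast; ring
  · have h2 : ¬ Even q := by rcases ho with ⟨k, hk⟩; rintro ⟨m, hm⟩; omega
    have h3 : ¬ Even (q - 2 * h) := by rcases ho with ⟨k, hk⟩; rintro ⟨m, hm⟩; omega
    simp only [ccFK, if_neg h2, if_neg h3]
    push_cast; ring

section

variable (v : ℤ → ℤ → ℚ)

lemma recFK
    (hrec : ∀ p q : ℤ, 2 ≤ q → q < p → Int.gcd p q = 1 →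
      (Even q → v p q = v (max (p - q) q) (min (p - q) q) - (q : ℚ) ^ 2 / 4) ∧
      (Odd q → v p q = v (max (p - q) q) (min (p - q) q) - ((q : ℚ) ^ 2 - 1) / 4)) :
    ∀ p q : ℤ, 2 ≤ q → q < p → Int.gcd p q = 1 →
      v p q = v (max (p - q) q) (min (p - q) q) - ccFK q := by
  intro p q hq hqp hg
  rcases Int.even_or_odd q with he | ho
  · rw [(hrec p q hq hqp hg).1 he]; simp [ccFK, he]
  · have hne : ¬ Even q := by rcases ho with ⟨k, hk⟩; rintro ⟨m, hm⟩; omega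
    rw [(hrec p q hq hqp hg).2 ho]; simp [ccFK, hne]

lemma vOne (hsym : ∀ a b : ℤ, v a b = v b a) (h1 : ∀ q : ℤ, v 1 q = 0) :
    ∀ x : ℤ, v x 1 = 0 := fun x => (hsym x 1).trans (h1 x)

lemma vSucc (hsym : ∀ a b : ℤ, v a b = v b a) (h10 : v 1 0 = 0) (h1 : ∀ q : ℤ, v 1 q = 0)
    (hrec : ∀ p q : ℤ, 2 ≤ q → q < p → Int.gcd p q = 1 →
      (Even q → v p q = v (max (p - q) q) (min (p - q) q) - (q : ℚ) ^ 2 / 4) ∧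
      (Odd q → v p q = v (max (p - q) q) (min (p - q) q) - ((q : ℚ) ^ 2 - 1) / 4)) :
    ∀ m : ℤ, 0 ≤ m → v (m + 1) m = -ccFK m := by
  intro m hm
  by_cases hm0 : m = 0
  · subst hm0; rw [ccFK_zero]; simpa using h10
  by_cases hm1 : m = 1
  · subst hm1; rw [ccFK_one]; simpa using vOne v hsym h1 2
  have hm2 : 2 ≤ m := by omega
  have hg : Int.gcd (m + 1) m = 1 :=
    Int.isCoprime_iff_gcd_eq_one.mp ⟨1, -1, by ring⟩
  have := recFK v hrec (m + 1) m hm2 (by omega) hg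
  rw [show m + 1 - m = 1 by ring, max_eq_right (by omega : (1:ℤ) ≤ m),
    min_eq_left (by omega : (1:ℤ) ≤ m), vOne v hsym h1 m] at this
  rw [this]; ring

lemma starPos (hsym : ∀ a b : ℤ, v a b = v b a) (h10 : v 1 0 = 0) (h1 : ∀ q : ℤ, v 1 q = 0)
    (hrec : ∀ p q : ℤ, 2 ≤ q → q < p → Int.gcd p q = 1 →
      (Even q → v p q = v (max (p - q) q) (min (p - q) q) - (q : ℚ) ^ 2 / 4) ∧
      (Odd q → v p q = v (max (p - q) q) (min (p - q) q) - ((q : ℚ) ^ 2 - 1) / 4)) :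
    ∀ a b : ℤ, 1 ≤ b → b ≤ a → IsCoprime a b →
      v a b = v (max (a - b) b) (min (a - b) b) - ccFK b := by
  intro a b hb1 hba hco
  rcases hba.lt_or_eq with hlt | heq
  · by_cases hb : b = 1
    · subst hb
      rw [ccFK_one, vOne v hsym h1 a, max_eq_left (by omega : (1:ℤ) ≤ a - 1),
        min_eq_right (by omega : (1:ℤ) ≤ a - 1), vOne v hsym h1 (a - 1)]
      ring
    · exact recFK v hrec a b (by omega) hlt (Int.isCoprime_iff_gcd_eq_one.mp hco)
  · have hu : IsUnit a := by
      apply hco.isUnit_of_dvd' dvd_rfl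
      rw [heq]
    have ha1 : a = 1 := by
      rcases Int.isUnit_iff.mp hu with h | h
      · exact h
      · omega
    subst ha1
    have hb' : b = 1 := by omega
    subst hb'
    norm_num [ccFK_one, h1, h10]

lemma starFK (hsym : ∀ a b : ℤ, v a b = v b a) (h10 : v 1 0 = 0) (h1 : ∀ q : ℤ, v 1 q = 0)
    (hrec : ∀ p q : ℤ, 2 ≤ q → q < p → Int.gcd p q = 1 →
      (Even q → v p q = v (max (p - q) q) (min (p - q) q) - (q : ℚ) ^ 2 / 4) ∧
      (Odd q → v p q = v (max (p - q) q) (min (p - q) q) - ((q : ℚ) ^ 2 - 1) / 4)) :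
    ∀ a b : ℤ, IsCoprime a b →
      ((a = 1 ∧ b = 0) ∨ (1 ≤ b ∧ b ≤ a) ∨ (a ≤ b ∧ b ≤ -1)) →
      v (max |a| |b|) (min |a| |b|) = v (max |a - b| |b|) (min |a - b| |b|) - ccFK b := by
  intro a b hco hcase
  rcases hcase with ⟨ha, hb⟩ | ⟨h1b, hba⟩ | ⟨hab, hb1⟩
  · subst ha; subst hb
    norm_num [ccFK_zero]
  · rw [abs_of_nonneg (by omega : (0:ℤ) ≤ a), abs_of_nonneg (by omega : (0:ℤ) ≤ b),
      abs_of_nonneg (by omega : (0:ℤ) ≤ a - b), max_eq_left hba, min_eq_right hba]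
    exact starPos v hsym h10 h1 hrec a b h1b hba hco
  · rw [abs_of_nonpos (by omega : a ≤ 0), abs_of_nonpos (by omega : b ≤ 0),
      abs_of_nonpos (by omega : a - b ≤ 0), max_eq_left (by omega : -b ≤ -a),
      min_eq_right (by omega : -b ≤ -a), ← ccFK_neg b]
    have hst := starPos v hsym h10 h1 hrec (-a) (-b) (by omega) (by omega) hco.neg_neg
    rw [show -a - -b = -(a - b) by ring] at hst
    exact hst

end

lemma triFK (p q t h : ℤ) (hq2 : 2 ≤ q) (hqp : q < p) (ht0 : 0 < t) (htp : t < p)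
    (hh0 : 0 < h) (hhq : h < q) (hb : h * p - t * q = 1) :
    (p - 2 * t = 1 ∧ q - 2 * h = 0) ∨ (1 ≤ q - 2 * h ∧ q - 2 * h ≤ p - 2 * t) ∨
      (p - 2 * t ≤ q - 2 * h ∧ q - 2 * h ≤ -1) := by
  have hab : h * (p - 2 * t) - t * (q - 2 * h) = 1 := by linear_combination hb
  have key : (p - q) * (p - 2 * t) = ((p - 2 * t) - (q - 2 * h)) * p - 2 := by
    linear_combination (-2) * hb
  have hp3 : 3 ≤ p := by omega
  rcases lt_trichotomy (q - 2 * h) 0 with hb0 | hb0 | hb0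
  · -- b ≤ -1, prove a ≤ -1 and a ≤ b
    have ha0 : p - 2 * t ≤ -1 := by
      by_contra hcon
      push_neg at hcon
      have h1' : 0 ≤ (h - 1) * (p - 2 * t) := by
        apply mul_nonneg <;> omega
      have h2' : 0 ≤ (t - 1) * (-(q - 2 * h) - 1) := by
        apply mul_nonneg <;> omega
      nlinarith [hab, h1', h2']
    refine Or.inr (Or.inr ⟨?_, by omega⟩)
    by_contra hcon
    push_neg at hcon
    have h1' : 0 ≤ (p - q) * (-(p - 2 * t) - 1) := by
      apply mul_nonneg <;> omega
    have h2' : 0 ≤ ((p - 2 * t) - (q - 2 * h) - 1) * p := by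
      apply mul_nonneg <;> omega
    nlinarith [key, h1', h2']
  · -- b = 0, prove a = 1
    have hha : h * (p - 2 * t) = 1 := by
      have : t * (q - 2 * h) = 0 := by rw [hb0]; ring
      linarith [hab]
    left
    refine ⟨?_, hb0⟩
    rcases le_or_gt (p - 2 * t) 0 with hle | hgt
    · exfalso
      have : 0 ≤ h * (-(p - 2 * t)) := mul_nonneg (by omega) (by omega)
      nlinarith
    · have h1' : 0 ≤ (h - 1) * (p - 2 * t) := mul_nonneg (by omega) (by omega)
      nlinarith
  · -- b ≥ 1, prove 1 ≤ a and b ≤ a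
    have ha0 : 1 ≤ p - 2 * t := by
      by_contra hcon
      push_neg at hcon
      have h1' : 0 ≤ h * (-(p - 2 * t)) := mul_nonneg (by omega) (by omega)
      have h2' : 0 ≤ (t - 1) * (q - 2 * h - 1) := mul_nonneg (by omega) (by omega)
      nlinarith [hab]
    refine Or.inr (Or.inl ⟨by omega, ?_⟩)
    by_contra hcon
    push_neg at hcon
    have h1' : 0 ≤ (p - q) * (p - 2 * t - 1) := mul_nonneg (by omega) (by omega)
    have h2' : 0 ≤ ((q - 2 * h) - (p - 2 * t) - 1) * p := mul_nonneg (by omega) (by omega)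
    nlinarith [key]

theorem upsilon_batson_move (v : ℤ → ℤ → ℚ)
    (hsym : ∀ a b : ℤ, v a b = v b a)
    (h10 : v 1 0 = 0)
    (h1 : ∀ q : ℤ, v 1 q = 0)
    (hrec : ∀ p q : ℤ, 2 ≤ q → q < p → Int.gcd p q = 1 →
      (Even q → v p q = v (max (p - q) q) (min (p - q) q) - (q : ℚ) ^ 2 / 4) ∧
      (Odd q → v p q = v (max (p - q) q) (min (p - q) q) - ((q : ℚ) ^ 2 - 1) / 4)) :
    ∀ p q t h : ℤ, 2 ≤ q → q < p → Int.gcd p q = 1 →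
      0 < t → t < p → 0 < h → h < q → h * p - t * q = 1 →
      v p q - v (max |p - 2 * t| |q - 2 * h|) (min |p - 2 * t| |q - 2 * h|)
        = ((1 - h * (p - t) - t * (q - h) : ℤ) : ℚ) / 2 := by
  suffices H : ∀ n : ℕ, ∀ p q t h : ℤ, p.natAbs ≤ n → 2 ≤ q → q < p → Int.gcd p q = 1 →
      0 < t → t < p → 0 < h → h < q → h * p - t * q = 1 →
      v p q - v (max |p - 2 * t| |q - 2 * h|) (min |p - 2 * t| |q - 2 * h|)
        = ((1 - h * (p - t) - t * (q - h) : ℤ) : ℚ) / 2 by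
    intro p q t h
    exact H p.natAbs p q t h le_rfl
  intro n
  induction n using Nat.strong_induction_on with
  | _ n IH =>
    intro p q t h hpn hq2 hqp hgcd ht0 htp hh0 hhq hb
    have hp3 : 3 ≤ p := by omega
    have hcoab : IsCoprime (p - 2 * t) (q - 2 * h) := ⟨h, -t, by linear_combination hb⟩
    have hdisj := triFK p q t h hq2 hqp ht0 htp hh0 hhq hb
    have E3 := starFK v hsym h10 h1 hrec (p - 2 * t) (q - 2 * h) hcoab hdisj
    rcases lt_trichotomy (p - q) q with hlt | heq | hgt
    · -- q < p < 2q
      by_cases hpq1 : p - q = 1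
      · -- p = q + 1, forcing h = t = 1
        have hpq : p = q + 1 := by omega
        have hht : h = t := by
          have e : (h - t) * q = 1 - h := by linear_combination hb - h * hpq
          rcases lt_trichotomy h t with hc | hc | hc
          · exfalso
            have : 0 ≤ (t - h - 1) * q := mul_nonneg (by omega) (by omega)
            nlinarith [e]
          · exact hc
          · exfalso
            have : 0 ≤ (h - t - 1) * q := mul_nonneg (by omega) (by omega)
            nlinarith [e]
        have hh1 : h = 1 := by
          have e : (h - t) * q = 1 - h := by linear_combination hb - h * hpq
          rw [hht] at e
          simp at e
          omega
        have ht1 : t = 1 := by omega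
        subst hh1; subst ht1
        subst hpq
        rw [show q + 1 - 2 * 1 = q - 1 by ring, show q - 2 * 1 = q - 2 by ring,
          abs_of_nonneg (by omega : (0:ℤ) ≤ q - 1), abs_of_nonneg (by omega : (0:ℤ) ≤ q - 2),
          max_eq_left (by omega : q - 2 ≤ q - 1), min_eq_right (by omega : q - 2 ≤ q - 1)]
        have E1 := vSucc v hsym h10 h1 hrec q (by omega)
        have E2 := vSucc v hsym h10 h1 hrec (q - 2) (by omega)
        rw [show q - 2 + 1 = q - 1 by ring] at E2
        have E4 := ccFK_sub q 1
        rw [show q - 2 * 1 = q - 2 by ring] at E4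
        push_cast at E4 ⊢
        linear_combination E1 - E2 - E4
      · -- 2 ≤ p - q < q
        have hpq2 : 2 ≤ p - q := by omega
        have hth : h < t := by
          by_contra hcon
          push_neg at hcon
          have h1' : 0 ≤ (h - t) * q := mul_nonneg (by omega) (by omega)
          have h2' : 0 ≤ h * (p - q - 2) := mul_nonneg (by omega) (by omega)
          nlinarith [hb]
        have hthpq : t - h < p - q := by
          by_contra hcon
          push_neg at hcon
          have e : (t - h) * q = h * (p - q) - 1 := by linear_combination -hb
          have h1' : 0 ≤ (t - h - (p - q)) * q := mul_nonneg (by omega) (by omega)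
          have h2' : 0 ≤ (q - 1 - h) * (p - q) := mul_nonneg (by omega) (by omega)
          nlinarith [e]
        have E1 := recFK v hrec p q hq2 hqp hgcd
        rw [max_eq_right (by omega : p - q ≤ q), min_eq_left (by omega : p - q ≤ q)] at E1
        have hgcd2 : Int.gcd q (p - q) = 1 :=
          Int.isCoprime_iff_gcd_eq_one.mp ⟨-(t - h), h, by linear_combination hb⟩
        have E2 := IH q.natAbs (by omega) q (p - q) (q - h) (p - q - t + h) le_rfl
          hpq2 hlt hgcd2 (by omega) (by omega) (by omega) (by omega)
          (by linear_combination hb)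
        rw [show q - 2 * (q - h) = -(q - 2 * h) by ring,
          show p - q - 2 * (p - q - t + h) = -(p - 2 * t - (q - 2 * h)) by ring,
          abs_neg, abs_neg, max_comm |q - 2 * h| |p - 2 * t - (q - 2 * h)|,
          min_comm |q - 2 * h| |p - 2 * t - (q - 2 * h)|] at E2
        have E4 := ccFK_sub q h
        push_cast at E2 E4 ⊢
        linear_combination E1 + E2 - E3 - E4
    · -- p = 2q, impossible
      exfalso
      have hp2 : p = 2 * q := by omega
      have hco : IsCoprime p q := Int.isCoprime_iff_gcd_eq_one.mpr hgcd
      have hu : IsUnit q := hco.isUnit_of_dvd' ⟨2, by omega⟩ dvd_rfl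
      rcases Int.isUnit_iff.mp hu with hq | hq <;> omega
    · -- p - q > q
      have hpq2 : 2 ≤ p - q := by omega
      have hth : h < t := by
        by_contra hcon
        push_neg at hcon
        have h1' : 0 ≤ (h - t) * q := mul_nonneg (by omega) (by omega)
        have h2' : 0 ≤ h * (p - q - 2) := mul_nonneg (by omega) (by omega)
        nlinarith [hb]
      have hthpq : t - h < p - q := by
        by_contra hcon
        push_neg at hcon
        have e : (t - h) * q = h * (p - q) - 1 := by linear_combination -hb
        have h1' : 0 ≤ (t - h - (p - q)) * q := mul_nonneg (by omega) (by omega)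
        have h2' : 0 ≤ (q - 1 - h) * (p - q) := mul_nonneg (by omega) (by omega)
        nlinarith [e]
      have E1 := recFK v hrec p q hq2 hqp hgcd
      rw [max_eq_left (by omega : q ≤ p - q), min_eq_right (by omega : q ≤ p - q)] at E1
      have hgcd2 : Int.gcd (p - q) q = 1 :=
        Int.isCoprime_iff_gcd_eq_one.mp ⟨h, h - t, by linear_combination hb⟩
      have E2 := IH (p - q).natAbs (by omega) (p - q) q (t - h) h le_rfl
        hq2 hgt hgcd2 (by omega) (by omega) hh0 hhq
        (by linear_combination hb)
      rw [show p - q - 2 * (t - h) = p - 2 * t - (q - 2 * h) by ring] at E2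
      have E4 := ccFK_sub q h
      push_cast at E2 E4 ⊢
      linear_combination E1 + E2 - E3 - E4
end

section
/- Let v be a rational-valued function on coprime pairs satisfying the Feller–Krcatovich recursion (v(p,q) = v(p−q,q) − q²/4 for q even, v(p,q) = v(p−q,q) − (q²−1)/4 for q odd, v symmetric, v(1,n) = 0). Then for every l ≥ 1: v(2l+1, 2l) − v(2l−1, 2l−2) = 1 − 2l, and v(2l+2, 2l+1) − v(2l, 2l−1) = −2l (with the convention v(2,1) = v(1,0) = 0). -/
theorem gcd_succ_self (n : ℤ) : Int.gcd (n + 1) n = 1 :=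
  Int.isCoprime_iff_gcd_eq_one.mp ⟨1, -1, by ring⟩

theorem upsilon_consecutive_diff (v : ℤ → ℤ → ℚ)
    (hsym : ∀ a b : ℤ, v a b = v b a)
    (h1 : ∀ n : ℤ, v 1 n = 0)
    (h21 : v 2 1 = 0)
    (h10 : v 1 0 = 0)
    (heven : ∀ p q : ℤ, 1 ≤ q → q < p → Int.gcd p q = 1 → Even q →
      v p q = v (p - q) q - (q : ℚ) ^ 2 / 4)
    (hodd : ∀ p q : ℤ, 1 ≤ q → q < p → Int.gcd p q = 1 → Odd q →
      v p q = v (p - q) q - ((q : ℚ) ^ 2 - 1) / 4) :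
    ∀ l : ℤ, 1 ≤ l →
      v (2 * l + 1) (2 * l) - v (2 * l - 1) (2 * l - 2) = 1 - 2 * (l : ℚ) ∧
      v (2 * l + 2) (2 * l + 1) - v (2 * l) (2 * l - 1) = -(2 * (l : ℚ)) := by
  intro l hl
  have hg1 : Int.gcd (2 * l + 1) (2 * l) = 1 := gcd_succ_self (2 * l)
  have hg2 : Int.gcd (2 * l + 2) (2 * l + 1) = 1 := by
    have := gcd_succ_self (2 * l + 1); simpa [add_assoc] using this
  have hg3 : Int.gcd (2 * l) (2 * l - 1) = 1 := by
    have := gcd_succ_self (2 * l - 1); simpa using this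
  have e1 := heven (2 * l + 1) (2 * l) (by omega) (by omega) hg1 ⟨l, by ring⟩
  have e2 := hodd (2 * l + 2) (2 * l + 1) (by omega) (by omega) hg2 ⟨l, by ring⟩
  have e3 := hodd (2 * l) (2 * l - 1) (by omega) (by omega) hg3 ⟨l - 1, by ring⟩
  rw [show (2 * l + 1 - 2 * l : ℤ) = 1 by ring, h1] at e1
  rw [show (2 * l + 2 - (2 * l + 1) : ℤ) = 1 by ring, h1] at e2
  rw [show (2 * l - (2 * l - 1) : ℤ) = 1 by ring, h1] at e3
  rcases eq_or_lt_of_le hl with h | h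
  · subst h
    norm_num at e1 e2 e3 ⊢
    rw [e1, e2, e3, h10]
    norm_num
  · have hg4 : Int.gcd (2 * l - 1) (2 * l - 2) = 1 := by
      have := gcd_succ_self (2 * l - 2)
      rw [show (2 * l - 2 + 1 : ℤ) = 2 * l - 1 by ring] at this
      exact this
    have e4 := heven (2 * l - 1) (2 * l - 2) (by omega) (by omega) hg4 ⟨l - 1, by ring⟩
    rw [show (2 * l - 1 - (2 * l - 2) : ℤ) = 1 by ring, h1] at e4
    rw [e1, e2, e3, e4]
    constructor <;> push_cast <;> ring
end
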